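/- Let τ > 0 and let C_τ(a) = a·min(1, τ/|a|) be the clipping operator. For Y ~ N(μ_t, 1) with |μ_t| ≤ τ, define μ_{t+1} = μ_t − E[C_τ(Y)]. Then |μ_{t+1}| ≤ (3/2 − Φ(τ))·|μ_t|, where Φ is the standard Gaussian CDF. -/

import Mathlib

open MeasureTheory ProbabilityTheory Set Real Filter
open scoped ENNReal NNReal

/-- Clipping operator `C_τ(a) = a * min(1, τ/|a|)`. -/
noncomputable def clip (τ a : ℝ) : ℝ := a * min 1 (τ / |a|)

/-- Standard Gaussian CDF. -/
noncomputable def Phi (x : ℝ) : ℝ := ((gaussianReal 0 1) (Set.Iic x)).toReal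

/-- standard gaussian pdf -/
noncomputable def sg (x : ℝ) : ℝ := (Real.sqrt (2 * Real.pi))⁻¹ * Real.exp (-x^2/2)

lemma sg_eq : gaussianPDFReal 0 1 = sg := by
  funext x
  simp [gaussianPDFReal, sg]

lemma sg_nonneg (x : ℝ) : 0 ≤ sg x := by
  unfold sg; positivity

lemma sg_cont : Continuous sg := by
  unfold sg; fun_prop

lemma sg_exp_form (x : ℝ) : sg x = (Real.sqrt (2 * Real.pi))⁻¹ * Real.exp (-(1/2) * x^2) := by
  unfold sg; ring_nf

lemma sg_integrable : Integrable sg := by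
  have := (integrable_exp_neg_mul_sq (by norm_num : (0:ℝ) < 1/2)).const_mul (Real.sqrt (2 * Real.pi))⁻¹
  have h : (fun x : ℝ => (Real.sqrt (2 * Real.pi))⁻¹ * Real.exp (-(1/2) * x^2)) = sg := by
    funext x; rw [sg_exp_form]
  rwa [h] at this

lemma id_mul_sg_integrable : Integrable (fun x => x * sg x) := by
  have := (integrable_mul_exp_neg_mul_sq (by norm_num : (0:ℝ) < 1/2)).const_mul (Real.sqrt (2 * Real.pi))⁻¹
  have h : (fun x : ℝ => (Real.sqrt (2 * Real.pi))⁻¹ * (x * Real.exp (-(1/2) * x^2)))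
      = fun x => x * sg x := by
    funext x; rw [sg_exp_form]; ring
  rwa [h] at this

lemma sg_hasDerivAt (x : ℝ) : HasDerivAt sg (-x * sg x) x := by
  have h1 : HasDerivAt (fun y : ℝ => -y^2/2) (-x) x := by
    have := ((hasDerivAt_pow 2 x).neg).div_const 2
    simpa using this.congr_deriv (by ring)
  have h2 := (h1.exp).const_mul (Real.sqrt (2 * Real.pi))⁻¹
  have : HasDerivAt sg ((Real.sqrt (2 * Real.pi))⁻¹ * (Real.exp (-x^2/2) * -x)) x := h2
  convert this using 1
  unfold sg; ring

lemma integral_sg : ∫ x, sg x = 1 := by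
  rw [← sg_eq]
  exact integral_gaussianPDFReal_eq_one 0 one_ne_zero

lemma sg_shift (μ x : ℝ) : gaussianPDFReal μ 1 x = sg (x - μ) := by
  simp [gaussianPDFReal, sg]

lemma integral_gauss (μ : ℝ) (g : ℝ → ℝ) :
    ∫ y, g y ∂(gaussianReal μ 1) = ∫ y, sg (y - μ) * g y := by
  rw [gaussianReal_of_var_ne_zero _ one_ne_zero]
  have hd : (gaussianPDF μ 1) = fun x => (((gaussianPDFReal μ 1 x).toNNReal : ℝ≥0) : ℝ≥0∞) := rfl
  rw [hd, integral_withDensity_eq_integral_smul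
    ((measurable_gaussianPDFReal μ 1).real_toNNReal) g]
  congr 1
  funext x
  rw [NNReal.smul_def, smul_eq_mul, Real.coe_toNNReal _ (gaussianPDFReal_nonneg μ 1 x), sg_shift]

lemma gauss_set_eq (s : Set ℝ) : ((gaussianReal 0 1) s).toReal = ∫ x in s, sg x := by
  rw [gaussianReal_apply_eq_integral 0 one_ne_zero s, ← sg_eq] at *
  rw [sg_eq, ENNReal.toReal_ofReal (integral_nonneg fun x => sg_nonneg x)]

lemma Phi_eq (x : ℝ) : Phi x = ∫ t in Iic x, sg t := gauss_set_eq _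

lemma Phi_le_one (x : ℝ) : Phi x ≤ 1 := by
  unfold Phi
  have h1 : gaussianReal 0 1 (Iic x) ≤ 1 := prob_le_one
  have := ENNReal.toReal_mono (by norm_num) h1
  simpa using this

lemma Phi_mono : Monotone Phi := by
  intro a b hab
  unfold Phi
  exact ENNReal.toReal_mono (measure_ne_top _ _) (measure_mono (Iic_subset_Iic.2 hab))

lemma Phi_zero : Phi 0 = 1/2 := by
  have hsplit : Phi 0 + ∫ x in Ioi (0:ℝ), sg x = 1 := by
    rw [Phi_eq, ← integral_sg]
    rw [← compl_Iic]
    exact integral_add_compl measurableSet_Iic sg_integrable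
  have hsym : ∫ x in Ioi (0:ℝ), sg x = Phi 0 := by
    rw [Phi_eq]
    have : ∫ x in Iic (0:ℝ), sg x = ∫ x in Ioi (-(0:ℝ)), sg (-x) := by
      rw [integral_comp_neg_Ioi]; simp
    rw [this]
    simp only [neg_zero]
    congr 1
    funext x
    unfold sg; ring_nf
  rw [hsym] at hsplit
  linarith

lemma Phi_sub_Phi {a b : ℝ} (hab : a ≤ b) : Phi b - Phi a = ∫ t in Ioc a b, sg t := by
  rw [Phi_eq, Phi_eq]
  have : Iic b = Iic a ∪ Ioc a b := (Iic_union_Ioc_eq_Iic hab).symm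
  rw [this, setIntegral_union (by simp [disjoint_left]; intro x h1 h2; linarith)
    measurableSet_Ioc sg_integrable.integrableOn sg_integrable.integrableOn]
  ring

lemma Phi_as_intervalIntegral (b : ℝ) : Phi b = Phi 0 + ∫ t in (0:ℝ)..b, sg t := by
  rcases le_total 0 b with h | h
  · rw [intervalIntegral.integral_of_le h, MeasureTheory.integral_Ioc_eq_integral_Ioo,
      ← MeasureTheory.integral_Ioc_eq_integral_Ioo, ← Phi_sub_Phi h]
    ring
  · rw [intervalIntegral.integral_symm, intervalIntegral.integral_of_le h, ← Phi_sub_Phi h]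
    ring

lemma hasDerivAt_Phi (x : ℝ) : HasDerivAt Phi (sg x) x := by
  have h : HasDerivAt (fun b => Phi 0 + ∫ t in (0:ℝ)..b, sg t) (sg x) x := by
    refine HasDerivAt.const_add _ ?_
    exact intervalIntegral.integral_hasDerivAt_right
      (sg_cont.intervalIntegrable _ _)
      (sg_cont.stronglyMeasurable.stronglyMeasurableAtFilter)
      sg_cont.continuousAt
  have : Phi = fun b => Phi 0 + ∫ t in (0:ℝ)..b, sg t := funext Phi_as_intervalIntegral
  rw [this]
  exact h

noncomputable def psi (a : ℝ) : ℝ := sg a - a * (1 - Phi a)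

lemma tendsto_sg_atTop : Filter.Tendsto sg atTop (nhds 0) := by
  have h1 : Filter.Tendsto (fun x : ℝ => -x^2/2) atTop atBot := by
    apply Filter.Tendsto.atBot_div_const (by norm_num)
    exact tendsto_neg_atTop_atBot.comp (tendsto_pow_atTop (two_ne_zero))
  have h2 := Real.tendsto_exp_atBot.comp h1
  have h3 := h2.const_mul (Real.sqrt (2 * Real.pi))⁻¹
  rw [mul_zero] at h3
  exact h3.congr fun x => rfl

lemma tail_sg (b : ℝ) : ∫ x in Ioi b, sg x = 1 - Phi b := by
  have hsplit : Phi b + ∫ x in Ioi b, sg x = 1 := by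
    rw [Phi_eq, ← integral_sg, ← compl_Iic]
    exact integral_add_compl measurableSet_Iic sg_integrable
  linarith

lemma tail_id_mul_sg (b : ℝ) : ∫ x in Ioi b, x * sg x = sg b := by
  have key := integral_Ioi_of_hasDerivAt_of_tendsto' (a := b) (m := 0)
    (f := fun x => -sg x) (f' := fun x => x * sg x)
    (fun x _ => by exact (sg_hasDerivAt x).neg.congr_deriv (by ring))
    id_mul_sg_integrable.integrableOn
    (by have := tendsto_sg_atTop.neg; rwa [neg_zero] at this)
  simpa using key

lemma tail_shift (b : ℝ) : ∫ x in Ioi b, (x - b) * sg x = psi b := by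
  have h1 : ∫ x in Ioi b, (x - b) * sg x = ∫ x in Ioi b, (x * sg x - b * sg x) := by
    congr 1; funext x; ring
  rw [h1, MeasureTheory.integral_sub id_mul_sg_integrable.integrableOn
    (sg_integrable.integrableOn.const_mul b), tail_id_mul_sg,
    MeasureTheory.integral_const_mul, tail_sg]
  rfl

lemma sg_mul_max_eq (μ a : ℝ) :
    (fun y => sg y * max (y + μ - a) 0) = (Ioi (a - μ)).indicator (fun y => (y - (a - μ)) * sg y) := by
  funext y
  by_cases h : a - μ < y
  · rw [Set.indicator_of_mem (mem_Ioi.2 h), max_eq_left (by linarith)]; ring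
  · push_neg at h
    rw [indicator_of_notMem (by simpa using h), max_eq_right (by linarith)]; ring

lemma integrable_shift_mul_sg (c : ℝ) : Integrable (fun y : ℝ => (y - c) * sg y) := by
  have : Integrable (fun y : ℝ => y * sg y - c * sg y) :=
    id_mul_sg_integrable.sub (sg_integrable.const_mul c)
  exact this.congr (Filter.Eventually.of_forall fun y => by ring)

lemma integrable_sg_mul_max (μ a : ℝ) : Integrable (fun y => sg (y - μ) * max (y - a) 0) := by
  have hint : Integrable (fun u : ℝ => sg u * max (u + μ - a) 0) := by
    rw [sg_mul_max_eq]
    exact (integrable_shift_mul_sg (a - μ)).indicator measurableSet_Ioi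
  have h2 := hint.comp_sub_right μ
  refine h2.congr (Filter.Eventually.of_forall fun y => ?_)
  simp only [show y - μ + μ - a = y - a from by ring]

lemma integrable_gauss_iff (μ : ℝ) (g : ℝ → ℝ) :
    Integrable g (gaussianReal μ 1) ↔ Integrable (fun y => sg (y - μ) * g y) := by
  rw [gaussianReal_of_var_ne_zero _ one_ne_zero]
  have hd : (gaussianPDF μ 1) = fun x => (((gaussianPDFReal μ 1 x).toNNReal : ℝ≥0) : ℝ≥0∞) := rfl
  rw [hd, integrable_withDensity_iff_integrable_smul
    ((measurable_gaussianPDFReal μ 1).real_toNNReal)]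
  have heq : (fun x => ((gaussianPDFReal μ 1 x).toNNReal : ℝ≥0) • g x)
      = fun y => sg (y - μ) * g y := by
    funext x
    rw [NNReal.smul_def, smul_eq_mul, Real.coe_toNNReal _ (gaussianPDFReal_nonneg μ 1 x), sg_shift]
  rw [heq]

lemma integrable_max_gauss (μ a : ℝ) :
    Integrable (fun y => max (y - a) 0) (gaussianReal μ 1) := by
  rw [integrable_gauss_iff]; exact integrable_sg_mul_max μ a

lemma integrable_id_gauss (μ : ℝ) : Integrable (fun y => y) (gaussianReal μ 1) := by
  rw [integrable_gauss_iff]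
  have hint : Integrable (fun u : ℝ => sg u * (u + μ)) := by
    have : Integrable (fun u : ℝ => u * sg u + μ * sg u) :=
      id_mul_sg_integrable.add (sg_integrable.const_mul μ)
    exact this.congr (Filter.Eventually.of_forall fun y => by ring)
  have h2 := hint.comp_sub_right μ
  refine h2.congr (Filter.Eventually.of_forall fun y => ?_)
  simp only [show y - μ + μ = y from by ring]

lemma integral_id_mul_sg : ∫ x, x * sg x = 0 := by
  have hsg : ∀ x, sg (-x) = sg x := fun x => by unfold sg; ring_nf
  have h := integral_neg_eq_self (fun x => x * sg x) (volume : Measure ℝ)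
  have h2 : ∫ x, -x * sg (-x) = - ∫ x, x * sg x := by
    rw [← MeasureTheory.integral_neg]
    congr 1; funext x; rw [hsg]; ring
  rw [h2] at h
  linarith

lemma integral_id_gauss (μ : ℝ) : ∫ y, y ∂(gaussianReal μ 1) = μ := by
  rw [integral_gauss]
  rw [← integral_add_right_eq_self (fun y => sg (y - μ) * y) μ]
  simp only [add_sub_cancel_right]
  have h1 : ∫ x, sg x * (x + μ) = ∫ x, (x * sg x + μ * sg x) := by
    congr 1; funext x; ring
  rw [h1, MeasureTheory.integral_add id_mul_sg_integrable (sg_integrable.const_mul μ),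
    integral_id_mul_sg, MeasureTheory.integral_const_mul, integral_sg]
  ring

lemma integral_max_gauss (μ a : ℝ) :
    ∫ y, max (y - a) 0 ∂(gaussianReal μ 1) = psi (a - μ) := by
  rw [integral_gauss]
  rw [← integral_add_right_eq_self (fun y => sg (y - μ) * max (y - a) 0) μ]
  simp only [add_sub_cancel_right]
  have h1 : (fun x => sg x * max (x + μ - a) 0)
      = (Ioi (a - μ)).indicator (fun y => (y - (a - μ)) * sg y) := sg_mul_max_eq μ a
  rw [h1, MeasureTheory.integral_indicator measurableSet_Ioi, tail_shift]

lemma psi_hasDerivAt (a : ℝ) : HasDerivAt psi (Phi a - 1) a := by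
  have h2 : HasDerivAt (fun b => b * (1 - Phi b)) (1 * (1 - Phi a) + a * (0 - sg a)) a :=
    (hasDerivAt_id a).mul ((hasDerivAt_const a 1).sub (hasDerivAt_Phi a))
  have h3 : HasDerivAt (fun b => sg b - b * (1 - Phi b)) (-a * sg a - (1 * (1 - Phi a) + a * (0 - sg a))) a :=
    (sg_hasDerivAt a).sub h2
  have : psi = fun b => sg b - b * (1 - Phi b) := rfl
  rw [this]
  convert h3 using 1
  ring

lemma psi_lip {s t C : ℝ} (hst : s ≤ t) (hC : ∀ x ∈ Icc s t, 1 - Phi x ≤ C) :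
    |psi t - psi s| ≤ C * (t - s) := by
  have h := Convex.norm_image_sub_le_of_norm_hasDerivWithin_le
    (f := psi) (f' := fun x => Phi x - 1) (C := C)
    (fun x _ => (psi_hasDerivAt x).hasDerivWithinAt)
    (fun x hx => by
      rw [Real.norm_eq_abs, abs_sub_comm, abs_of_nonneg (sub_nonneg.2 (Phi_le_one x))]
      exact hC x hx)
    (convex_Icc s t) (left_mem_Icc.2 hst) (right_mem_Icc.2 hst)
  rw [Real.norm_eq_abs, Real.norm_eq_abs, abs_of_nonneg (sub_nonneg.2 hst)] at h
  exact h

lemma gauss_map_neg (μ : ℝ) :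
    Measure.map (fun y : ℝ => -y) (gaussianReal μ 1) = gaussianReal (-μ) 1 := by
  have h := gaussianReal_map_const_mul (μ := μ) (v := 1) (-1)
  have h1 : (fun y : ℝ => (-1) * y) = fun y : ℝ => -y := by funext y; ring
  rw [h1] at h
  rw [h]
  congr 1
  · ring
  · ext; norm_num

lemma integrable_max_neg_gauss (μ a : ℝ) :
    Integrable (fun y => max (-y - a) 0) (gaussianReal μ 1) := by
  have hmeas : AEStronglyMeasurable (fun y => max (y - a) 0) (gaussianReal (-μ) 1) :=
    (continuous_id.sub continuous_const).max continuous_const |>.aestronglyMeasurable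
  have hm2 : AEStronglyMeasurable (fun y => max (y - a) 0)
      (Measure.map (fun y : ℝ => -y) (gaussianReal μ 1)) := by
    rw [gauss_map_neg μ]; exact hmeas
  have h := (integrable_map_measure hm2 measurable_neg.aemeasurable).mp
  rw [gauss_map_neg μ] at h
  exact h (integrable_max_gauss (-μ) a)

lemma integral_max_neg_gauss (μ a : ℝ) :
    ∫ y, max (-y - a) 0 ∂(gaussianReal μ 1) = psi (a + μ) := by
  have hmeas : AEStronglyMeasurable (fun y => max (y - a) 0) (gaussianReal (-μ) 1) :=
    (continuous_id.sub continuous_const).max continuous_const |>.aestronglyMeasurable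
  have h := MeasureTheory.integral_map (μ := gaussianReal μ 1)
    (φ := fun y : ℝ => -y) measurable_neg.aemeasurable
    (by rw [gauss_map_neg μ]; exact hmeas)
  rw [gauss_map_neg μ, integral_max_gauss (-μ) a] at h
  rw [← h]
  have : a - -μ = a + μ := by ring
  rw [this]

lemma clip_decomp {τ : ℝ} (hτ : 0 < τ) (y : ℝ) :
    y - clip τ y = max (y - τ) 0 - max (-y - τ) 0 := by
  unfold clip
  rcases eq_or_ne y 0 with rfl | hy
  · simp [max_eq_right hτ.le]
  · have hay : 0 < |y| := abs_pos.2 hy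
    rcases le_or_gt (|y|) τ with h | h
    · rw [min_eq_left (by rw [le_div_iff₀ hay]; linarith)]
      have h1 : y - τ ≤ 0 := by cases abs_cases y <;> linarith
      have h2 : -y - τ ≤ 0 := by cases abs_cases y <;> linarith
      rw [max_eq_right h1, max_eq_right h2]; ring
    · rw [min_eq_right (by rw [div_le_one hay]; linarith)]
      rcases lt_or_ge 0 y with hy0 | hy0
      · have hxy : |y| = y := abs_of_pos hy0
        rw [hxy]
        have h1 : 0 ≤ y - τ := by linarith [hxy ▸ h]
        have h2 : -y - τ ≤ 0 := by nlinarith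
        rw [max_eq_left h1, max_eq_right h2]
        field_simp
        ring
      · have hxy : |y| = -y := abs_of_neg (lt_of_le_of_ne hy0 hy)
        rw [hxy]
        have h1 : y - τ ≤ 0 := by nlinarith
        have h2 : 0 ≤ -y - τ := by linarith [hxy ▸ h]
        rw [max_eq_right h1, max_eq_left h2]
        have hy' : y < 0 := lt_of_le_of_ne hy0 hy
        have : y * (τ / -y) = -τ := by
          have hy'' : -y ≠ 0 := by linarith
          field_simp
        rw [this]; ring

lemma clip_abs_le {τ : ℝ} (hτ : 0 < τ) (y : ℝ) : |clip τ y| ≤ τ := by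
  unfold clip
  rcases eq_or_ne y 0 with rfl | hy
  · simpa using hτ.le
  · have hay : 0 < |y| := abs_pos.2 hy
    have hmin : 0 ≤ min 1 (τ / |y|) := le_min zero_le_one (by positivity)
    rw [abs_mul, abs_of_nonneg hmin]
    calc |y| * min 1 (τ / |y|) ≤ |y| * (τ / |y|) :=
          mul_le_mul_of_nonneg_left (min_le_right _ _) (abs_nonneg y)
      _ = τ := by field_simp

lemma clip_integrable {τ : ℝ} (hτ : 0 < τ) (μ : ℝ) :
    Integrable (fun y => clip τ y) (gaussianReal μ 1) := by
  apply (integrable_const τ).mono'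
  · have : Measurable fun y => clip τ y :=
      measurable_id.mul (measurable_const.min (measurable_const.div measurable_abs))
    exact this.aestronglyMeasurable
  · exact Filter.Eventually.of_forall fun y => by
      rw [Real.norm_eq_abs]; exact clip_abs_le hτ y

lemma integral_clip_eq {τ : ℝ} (hτ : 0 < τ) (μ : ℝ) :
    μ - ∫ y, clip τ y ∂(gaussianReal μ 1) = psi (τ - μ) - psi (τ + μ) := by
  have h1 : μ - ∫ y, clip τ y ∂(gaussianReal μ 1)
      = ∫ y, (y - clip τ y) ∂(gaussianReal μ 1) := by
    rw [MeasureTheory.integral_sub (integrable_id_gauss μ) (clip_integrable hτ μ),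
      integral_id_gauss]
  rw [h1]
  have h2 : ∫ y, (y - clip τ y) ∂(gaussianReal μ 1)
      = ∫ y, (max (y - τ) 0 - max (-y - τ) 0) ∂(gaussianReal μ 1) := by
    congr 1; funext y; exact clip_decomp hτ y
  rw [h2, MeasureTheory.integral_sub (integrable_max_gauss μ τ) (integrable_max_neg_gauss μ τ),
    integral_max_gauss, integral_max_neg_gauss]

theorem stmt0 (τ μt : ℝ) (hτ : 0 < τ) (hμ : |μt| ≤ τ) :
    |μt - ∫ y, clip τ y ∂(gaussianReal μt 1)| ≤ (3 / 2 - Phi τ) * |μt| := by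
  rw [integral_clip_eq hτ μt]
  have habs := abs_le.1 hμ
  obtain ⟨hl, hr⟩ := habs
  rcases le_total 0 μt with hm | hm
  · rw [abs_of_nonneg hm]
    have e1 : |psi τ - psi (τ - μt)| ≤ 1/2 * (τ - (τ - μt)) := by
      apply psi_lip (by linarith)
      intro x hx
      have h0 : Phi 0 ≤ Phi x := Phi_mono (by linarith [hx.1])
      rw [Phi_zero] at h0; linarith
    have e2 : |psi (τ + μt) - psi τ| ≤ (1 - Phi τ) * ((τ + μt) - τ) := by
      apply psi_lip (by linarith)
      intro x hx
      have h0 : Phi τ ≤ Phi x := Phi_mono hx.1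
      linarith
    have tri : |psi (τ - μt) - psi (τ + μt)| ≤ |psi τ - psi (τ - μt)| + |psi (τ + μt) - psi τ| := by
      have h := abs_sub_le (psi (τ - μt)) (psi τ) (psi (τ + μt))
      rw [abs_sub_comm (psi (τ - μt)) (psi τ), abs_sub_comm (psi τ) (psi (τ + μt))] at h
      exact h
    calc |psi (τ - μt) - psi (τ + μt)|
        ≤ |psi τ - psi (τ - μt)| + |psi (τ + μt) - psi τ| := tri
      _ ≤ 1/2 * (τ - (τ - μt)) + (1 - Phi τ) * ((τ + μt) - τ) := add_le_add e1 e2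
      _ = (3 / 2 - Phi τ) * μt := by ring
  · rw [abs_of_nonpos hm]
    have e1 : |psi (τ - μt) - psi τ| ≤ (1 - Phi τ) * ((τ - μt) - τ) := by
      apply psi_lip (by linarith)
      intro x hx
      have h0 : Phi τ ≤ Phi x := Phi_mono hx.1
      linarith
    have e2 : |psi τ - psi (τ + μt)| ≤ 1/2 * (τ - (τ + μt)) := by
      apply psi_lip (by linarith)
      intro x hx
      have h0 : Phi 0 ≤ Phi x := Phi_mono (by linarith [hx.1])
      rw [Phi_zero] at h0; linarith
    have tri : |psi (τ - μt) - psi (τ + μt)| ≤ |psi (τ - μt) - psi τ| + |psi τ - psi (τ + μt)| :=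
      abs_sub_le _ _ _
    calc |psi (τ - μt) - psi (τ + μt)|
        ≤ |psi (τ - μt) - psi τ| + |psi τ - psi (τ + μt)| := tri
      _ ≤ (1 - Phi τ) * ((τ - μt) - τ) + 1/2 * (τ - (τ + μt)) := add_le_add e1 e2
      _ = (3 / 2 - Phi τ) * (-μt) := by ring
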